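/- For k ≥ 1 let T_k be the k×k complex matrix with diagonal (−1, −1, …, −1, 0), all superdiagonal entries equal to 1, and all other entries 0. If z ∈ ℂ satisfies |1 + z| > 1, then T_k − zI_k is invertible for every k and there is a constant C (depending on z but not on k) such that the operator norm ‖(T_k − zI_k)⁻¹‖ ≤ C for all k, where the operator norm is taken with respect to the ℓ² norm on ℂᵏ. -/

import Mathlib

/-- The `k×k` matrix with diagonal `(−1,…,−1,0)`, superdiagonal entries `1` and all other
entries `0`, from Example 4.3 of the paper. -/
def exampleMatrix (k : ℕ) : Matrix (Fin k) (Fin k) ℂ :=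
  Matrix.of fun i j =>
    if i = j then (if (i : ℕ) = k - 1 then 0 else -1)
    else if (j : ℕ) = (i : ℕ) + 1 then 1 else 0

open scoped Matrix.Norms.L2Operator Matrix

namespace Ex43

variable (k : ℕ)

def S : Matrix (Fin k) (Fin k) ℂ :=
  Matrix.of fun i j => if (j : ℕ) = (i : ℕ) + 1 then 1 else 0

def E : Matrix (Fin k) (Fin k) ℂ :=
  Matrix.of fun i j => if (i : ℕ) = k - 1 ∧ (j : ℕ) = k - 1 then 1 else 0

lemma S_pow_apply (m : ℕ) (i j : Fin k) :
    (S k ^ m) i j = if (j : ℕ) = (i : ℕ) + m then 1 else 0 := by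
  induction m generalizing i j with
  | zero => simp [Matrix.one_apply, Fin.ext_iff, eq_comm]
  | succ m ih =>
    rw [pow_succ, Matrix.mul_apply]
    by_cases h : (j : ℕ) = (i : ℕ) + (m + 1)
    · have hlt : (i : ℕ) + m < k := by have := j.isLt; omega
      rw [Finset.sum_eq_single (⟨(i : ℕ) + m, hlt⟩ : Fin k)]
      · rw [ih]
        simp [S, h]
        omega
      · intro l _ hl
        rw [ih]
        rcases eq_or_ne ((l : ℕ)) ((i : ℕ) + m) with h' | h'
        · exact absurd (Fin.ext h') hl
        · simp [h']
      · simp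
    · rw [if_neg h]
      apply Finset.sum_eq_zero
      intro l _
      rw [ih]
      rcases eq_or_ne ((l : ℕ)) ((i : ℕ) + m) with h' | h'
      · simp only [S, Matrix.of_apply]
        have : ¬ ((j : ℕ) = (l : ℕ) + 1) := by omega
        simp [this]
      · simp [h']

end Ex43

namespace Ex43

lemma S_pow_k : S k ^ k = 0 := by
  ext i j
  rw [S_pow_apply]
  have := j.isLt
  simp only [Matrix.zero_apply, ite_eq_right_iff]
  omega

lemma E_mul_mul_E (hk : 1 ≤ k) (M : Matrix (Fin k) (Fin k) ℂ) :
    E k * M * E k = (M ⟨k - 1, by omega⟩ ⟨k - 1, by omega⟩) • E k := by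
  have hlast : (k - 1 : ℕ) < k := by omega
  set l : Fin k := ⟨k - 1, hlast⟩ with hl
  have hEM : E k * M = Matrix.of fun (i j : Fin k) => if (i : ℕ) = k - 1 then M l j else 0 := by
    ext i j
    rw [Matrix.mul_apply]
    by_cases h : (i : ℕ) = k - 1
    · rw [Finset.sum_eq_single l]
      · simp [E, h, hl]
      · intro b _ hb
        have : (b : ℕ) ≠ k - 1 := fun hb' => hb (Fin.ext hb')
        simp [E, this]
      · simp
    · simp only [Matrix.of_apply, if_neg h]
      apply Finset.sum_eq_zero
      intro b _
      simp [E, h]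
  rw [hEM]
  ext i j
  rw [Matrix.mul_apply]
  by_cases hi : (i : ℕ) = k - 1
  · by_cases hj : (j : ℕ) = k - 1
    · rw [Finset.sum_eq_single l]
      · simp [E, hi, hj, hl]
      · intro b _ hb
        have : (b : ℕ) ≠ k - 1 := fun hb' => hb (Fin.ext hb')
        simp [E, this]
      · simp
    · rw [Finset.sum_eq_zero]
      · simp [E, hj]
      · intro b _
        simp [E, hj]
  · rw [Finset.sum_eq_zero]
    · simp [E, hi]
    · intro b _
      simp [E, hi]

lemma E_proj : E k * E k = E k := by
  classical
  ext i j
  rw [Matrix.mul_apply]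
  by_cases hk : 1 ≤ k
  · have hlast : (k - 1 : ℕ) < k := by omega
    by_cases h : (i : ℕ) = k - 1 ∧ (j : ℕ) = k - 1
    · rw [Finset.sum_eq_single (⟨k - 1, hlast⟩ : Fin k)]
      · simp [E, h.1, h.2]
      · intro b _ hb
        have : (b : ℕ) ≠ k - 1 := fun hb' => hb (Fin.ext hb')
        simp [E, this]
      · simp
    · rw [Finset.sum_eq_zero]
      · simp [E, h]
      · intro b _
        rcases not_and_or.mp h with h' | h'
        · simp [E, h']
        · simp [E, h']
  · exact absurd i.isLt (by omega)

lemma E_star : (E k)ᴴ = E k := by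
  ext i j
  simp [E, Matrix.conjTranspose_apply, and_comm, apply_ite (star : ℂ → ℂ)]

end Ex43

namespace Ex43

variable (k : ℕ)

def P : Matrix (Fin k) (Fin k) ℂ :=
  Matrix.of fun (i j : Fin k) => if (i : ℕ) = (j : ℕ) ∧ 1 ≤ (i : ℕ) then 1 else 0

lemma S_star_mul_S : (S k)ᴴ * S k = P k := by
  ext i j
  rw [Matrix.mul_apply]
  by_cases h : (i : ℕ) = (j : ℕ) ∧ 1 ≤ (i : ℕ)
  · have hlt : (i : ℕ) - 1 < k := by have := i.isLt; omega
    rw [Finset.sum_eq_single (⟨(i : ℕ) - 1, hlt⟩ : Fin k)]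
    · have h1 : (i : ℕ) = (i : ℕ) - 1 + 1 := by omega
      have h2 : (j : ℕ) = (i : ℕ) - 1 + 1 := by omega
      simp only [S, P, Matrix.conjTranspose_apply, Matrix.of_apply, ← h.1]
      simp [h.2, ← h1]
    · intro b _ hb
      have hb' : (b : ℕ) ≠ (i : ℕ) - 1 := fun hb' => hb (Fin.ext hb')
      have : ¬ ((i : ℕ) = (b : ℕ) + 1) := by omega
      simp [S, Matrix.conjTranspose_apply, this]
    · simp
  · rw [Finset.sum_eq_zero]
    · simp [P, h]
    · intro b _
      by_cases hi : (i : ℕ) = (b : ℕ) + 1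
      · have : ¬ ((j : ℕ) = (b : ℕ) + 1) := by omega
        simp [S, Matrix.conjTranspose_apply, this]
      · simp [S, Matrix.conjTranspose_apply, hi]

lemma P_proj : P k * P k = P k := by
  ext i j
  rw [Matrix.mul_apply, Finset.sum_eq_single i]
  · by_cases h1 : 1 ≤ (i : ℕ) <;> simp [P, h1]
  · intro b _ hb
    have : (i : ℕ) ≠ (b : ℕ) := fun h => hb.symm (Fin.ext h)
    simp [P, this]
  · simp

lemma P_star : (P k)ᴴ = P k := by
  ext i j
  by_cases h : (i : ℕ) = (j : ℕ)
  · simp [P, Matrix.conjTranspose_apply, h, apply_ite (star : ℂ → ℂ)]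
  · have h' : (j : ℕ) ≠ (i : ℕ) := fun h' => h h'.symm
    simp [P, Matrix.conjTranspose_apply, h, h']

lemma norm_le_one_of_proj {n : ℕ} (M : Matrix (Fin n) (Fin n) ℂ)
    (hstar : Mᴴ = M) (hproj : M * M = M) : ‖M‖ ≤ 1 := by
  have h := Matrix.l2_opNorm_conjTranspose_mul_self M
  rw [hstar, hproj] at h
  nlinarith [norm_nonneg M]

lemma norm_E_le_one : ‖E k‖ ≤ 1 :=
  norm_le_one_of_proj _ E_star E_proj

lemma norm_S_le_one : ‖S k‖ ≤ 1 := by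
  have h := Matrix.l2_opNorm_conjTranspose_mul_self (S k)
  rw [S_star_mul_S] at h
  have hp : ‖P k‖ ≤ 1 := norm_le_one_of_proj _ (P_star k) (P_proj k)
  nlinarith [norm_nonneg (S k)]

lemma norm_one_le : ‖(1 : Matrix (Fin k) (Fin k) ℂ)‖ ≤ 1 := by
  rw [Matrix.cstar_norm_def, map_one]
  exact ContinuousLinearMap.norm_id_le

lemma norm_S_pow_le_one (m : ℕ) : ‖S k ^ m‖ ≤ 1 := by
  cases m with
  | zero => simpa using norm_one_le k
  | succ m =>
    calc ‖S k ^ (m + 1)‖ ≤ ‖S k‖ ^ (m + 1) := norm_pow_le' _ (Nat.succ_pos m)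
    _ ≤ 1 := pow_le_one₀ (norm_nonneg _) (norm_S_le_one k)

end Ex43

namespace Ex43

noncomputable def N (z : ℂ) (k : ℕ) : Matrix (Fin k) (Fin k) ℂ :=
  ∑ m ∈ Finset.range k, (-((1 + z)⁻¹ ^ (m + 1))) • S k ^ m

noncomputable def G (z : ℂ) (k : ℕ) : Matrix (Fin k) (Fin k) ℂ :=
  N z k - ((1 - (1 + z)⁻¹)⁻¹) • (N z k * (E k * N z k))

lemma B_mul_N (z : ℂ) (k : ℕ) (hα : (1 + z) ≠ 0) :
    (S k - (1 + z) • 1) * N z k = 1 := by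
  have h : (S k - (1 + z) • 1) * N z k
      = ∑ m ∈ Finset.range k,
          ((1 + z)⁻¹ ^ m • S k ^ m - (1 + z)⁻¹ ^ (m + 1) • S k ^ (m + 1)) := by
    rw [N, Matrix.sub_mul, Finset.mul_sum, smul_mul_assoc, one_mul, Finset.smul_sum,
      ← Finset.sum_sub_distrib]
    refine Finset.sum_congr rfl fun m _ => ?_
    rw [mul_smul_comm, ← pow_succ', smul_smul]
    have hcoef : (1 + z) * -((1 + z)⁻¹ ^ (m + 1)) = -((1 + z)⁻¹ ^ m) := by
      rw [pow_succ', mul_neg, ← mul_assoc, mul_inv_cancel₀ hα, one_mul]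
    rw [hcoef]
    module
  rw [h, Finset.sum_range_sub' (fun m => (1 + z)⁻¹ ^ m • S k ^ m), S_pow_k]
  simp

lemma N_apply_last (z : ℂ) (k : ℕ) (hk : 1 ≤ k) :
    N z k ⟨k - 1, by omega⟩ ⟨k - 1, by omega⟩ = -(1 + z)⁻¹ := by
  rw [N, Matrix.sum_apply]
  rw [Finset.sum_eq_single 0]
  · simp [S_pow_apply]
  · intro m _ hm
    rw [Matrix.smul_apply, S_pow_apply]
    have : ¬ ((k - 1 : ℕ) = k - 1 + m) := by omega
    simp [this, hm]
  · intro h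
    exact absurd (Finset.mem_range.mpr (by omega)) h

lemma A_eq (z : ℂ) (k : ℕ) :
    exampleMatrix k - z • (1 : Matrix (Fin k) (Fin k) ℂ)
      = (S k - (1 + z) • 1) + E k := by
  ext i j
  simp only [exampleMatrix, S, E, Matrix.sub_apply, Matrix.add_apply, Matrix.smul_apply,
    Matrix.one_apply, Matrix.of_apply, smul_eq_mul, Fin.ext_iff]
  have hi := i.isLt
  have hj := j.isLt
  split_ifs <;> first | (exfalso; omega) | ring

lemma AG (z : ℂ) (hα : (1 + z) ≠ 0) (hz0 : z ≠ 0) (hd : (1 : ℂ) - (1 + z)⁻¹ ≠ 0)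
    (k : ℕ) (hk : 1 ≤ k) :
    (exampleMatrix k - z • (1 : Matrix (Fin k) (Fin k) ℂ)) * G z k = 1 := by
  set c : ℂ := (1 - (1 + z)⁻¹)⁻¹ with hc_def
  set Nn := N z k with hN_def
  set X := E k * Nn with hX_def
  have hBN := B_mul_N z k hα
  have hENE : E k * Nn * E k = (-(1 + z)⁻¹) • E k := by
    rw [E_mul_mul_E hk, hN_def, N_apply_last z k hk]
  have h1 : (S k - (1 + z) • 1) * (Nn * X) = X := by
    rw [← mul_assoc, hBN, one_mul]
  have h2 : E k * (Nn * X) = (-(1 + z)⁻¹) • X := by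
    rw [hX_def, ← mul_assoc, ← mul_assoc, hENE, smul_mul_assoc]
  have hA : exampleMatrix k - z • (1 : Matrix (Fin k) (Fin k) ℂ)
      = (S k - (1 + z) • 1) + E k := A_eq z k
  rw [hA, G, ← hN_def, ← hX_def, ← hc_def, add_mul, mul_sub, mul_sub,
    mul_smul_comm, mul_smul_comm, h1, h2, hBN, smul_smul]
  have hx : X - (c * -(1 + z)⁻¹) • X = c • X := by
    match_scalars
    rw [hc_def]
    field_simp
    ring_nf
    simp [hz0]
  rw [hx]
  abel

end Ex43

namespace Ex43

lemma norm_N_le (z : ℂ) (k : ℕ) (ha : 1 < ‖1 + z‖) :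
    ‖N z k‖ ≤ (‖1 + z‖ - 1)⁻¹ := by
  set a := ‖1 + z‖ with ha_def
  have h0 : (0 : ℝ) < a := by linarith
  have hr0 : (0 : ℝ) ≤ a⁻¹ := by positivity
  have hr1 : a⁻¹ < 1 := by
    rw [inv_lt_one_iff₀]
    right; exact ha
  have step1 : ‖N z k‖ ≤ ∑ m ∈ Finset.range k, a⁻¹ ^ (m + 1) := by
    refine (norm_sum_le _ _).trans ?_
    refine Finset.sum_le_sum fun m _ => ?_
    rw [norm_smul, norm_neg, norm_pow]
    have h1 : ‖(1 + z)⁻¹‖ = a⁻¹ := by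
      rw [norm_inv]
    rw [h1]
    calc a⁻¹ ^ (m + 1) * ‖S k ^ m‖ ≤ a⁻¹ ^ (m + 1) * 1 := by
          have := norm_S_pow_le_one (k := k) m
          gcongr
    _ = a⁻¹ ^ (m + 1) := mul_one _
  refine step1.trans ?_
  have hle : ∑ m ∈ Finset.range k, a⁻¹ ^ (m + 1)
      = a⁻¹ * ∑ m ∈ Finset.range k, a⁻¹ ^ m := by
    rw [Finset.mul_sum]
    exact Finset.sum_congr rfl fun m _ => pow_succ' _ _
  rw [hle]
  have hg : ∑ m ∈ Finset.range k, a⁻¹ ^ m ≤ (1 - a⁻¹)⁻¹ := by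
    have h := (summable_geometric_of_lt_one hr0 hr1).sum_le_tsum (Finset.range k)
      (fun m _ => pow_nonneg hr0 m)
    rwa [tsum_geometric_of_lt_one hr0 hr1] at h
  calc a⁻¹ * ∑ m ∈ Finset.range k, a⁻¹ ^ m ≤ a⁻¹ * (1 - a⁻¹)⁻¹ := by gcongr
  _ = (a - 1)⁻¹ := by
      rw [← mul_inv]
      congr 1
      field_simp

end Ex43

/-- Bounded direction of the spectrum computation in Example 4.3: if `|1 + z| > 1`, then
`T_k − zI` is invertible for every `k ≥ 1` and the ℓ²-operator norms of the inverses are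
uniformly bounded in `k`. -/
theorem example_resolvent_uniformly_bounded
    (z : ℂ) (hz : 1 < ‖1 + z‖) :
    (∀ k : ℕ, 1 ≤ k → IsUnit (exampleMatrix k - z • (1 : Matrix (Fin k) (Fin k) ℂ))) ∧
    ∃ C : ℝ, ∀ k : ℕ, 1 ≤ k →
      ‖Matrix.toEuclideanCLM (𝕜 := ℂ)
        ((exampleMatrix k - z • (1 : Matrix (Fin k) (Fin k) ℂ))⁻¹)‖ ≤ C := by
  have hα : (1 + z) ≠ 0 := by
    intro h
    rw [h] at hz
    simp at hz
    linarith
  have hz0 : z ≠ 0 := by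
    intro h
    rw [h] at hz
    simp at hz
  have hd : (1 : ℂ) - (1 + z)⁻¹ ≠ 0 := by
    intro h
    have h1 : (1 + z)⁻¹ = 1 := (sub_eq_zero.mp h).symm
    field_simp at h1
    exact hz0 (by linear_combination -h1)
  have hAG : ∀ k : ℕ, 1 ≤ k →
      (exampleMatrix k - z • (1 : Matrix (Fin k) (Fin k) ℂ)) * Ex43.G z k = 1 :=
    fun k hk => Ex43.AG z hα hz0 hd k hk
  have hGA : ∀ k : ℕ, 1 ≤ k →
      Ex43.G z k * (exampleMatrix k - z • (1 : Matrix (Fin k) (Fin k) ℂ)) = 1 :=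
    fun k hk => mul_eq_one_comm.mp (hAG k hk)
  constructor
  · exact fun k hk => ⟨⟨_, Ex43.G z k, hAG k hk, hGA k hk⟩, rfl⟩
  set a := ‖1 + z‖ with ha_def
  set c : ℂ := (1 - (1 + z)⁻¹)⁻¹ with hc_def
  refine ⟨(a - 1)⁻¹ + ‖c‖ * ((a - 1)⁻¹ * (1 * (a - 1)⁻¹)), fun k hk => ?_⟩
  rw [← Matrix.cstar_norm_def, Matrix.inv_eq_right_inv (hAG k hk)]
  have hN := Ex43.norm_N_le z k hz
  have hr0 : (0 : ℝ) ≤ (a - 1)⁻¹ := le_of_lt (inv_pos.mpr (by simp only [ha_def]; linarith))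
  have hstep : ‖Ex43.G z k‖
      ≤ ‖Ex43.N z k‖ + ‖c‖ * (‖Ex43.N z k‖ * (‖Ex43.E k‖ * ‖Ex43.N z k‖)) := by
    refine (norm_sub_le _ _).trans ?_
    rw [norm_smul, ← hc_def]
    gcongr
    refine (Matrix.l2_opNorm_mul _ _).trans ?_
    gcongr
    exact Matrix.l2_opNorm_mul _ _
  refine hstep.trans ?_
  gcongr <;> first | exact hN | exact Ex43.norm_E_le_one k
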